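/- Let $d \ge 1$ and let $X, X_1, X_2, \dots$ be i.i.d. $\mathbb{C}^{d\times d}$-valued random variables with $\mathbb{E}[\|X\|_{HS}^2] < \infty$. Define $a_n := \mathbb{E}[\|X_1 \cdots X_n\|_{HS}^2]$ and let $T : \mathbb{C}^{d\times d} \to \mathbb{C}^{d\times d}$ be the linear operator $A \mapsto \mathbb{E}[X^* A X]$, with characteristic polynomial $p_T(x) = x^l + c_1 x^{l-1} + \dots + c_l$ where $l = d^2$. Then for all $n \ge 1$, $a_{n+l} + c_1 a_{n+l-1} + \dots + c_l a_n = 0$. -/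

import Mathlib

open MeasureTheory ProbabilityTheory Matrix

noncomputable instance matMS {d : ℕ} : MeasurableSpace (Matrix (Fin d) (Fin d) ℂ) :=
  MeasurableSpace.pi

/-- The product `X 0 ω * X 1 ω * ⋯ * X (n-1) ω`. -/
noncomputable def matProd {Ω : Type*} {d : ℕ}
    (X : ℕ → Ω → Matrix (Fin d) (Fin d) ℂ) (n : ℕ) (ω : Ω) :
    Matrix (Fin d) (Fin d) ℂ :=
  ((List.range n).map fun i => X i ω).prod

set_option linter.unusedSectionVars false
namespace Stmt3Aux

variable {d : ℕ} {Ω : Type*} [MeasurableSpace Ω] {μ : MeasureTheory.Measure Ω}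
  {X : ℕ → Ω → Matrix (Fin d) (Fin d) ℂ}

lemma measurable_entry (i j : Fin d) :
    Measurable fun M : Matrix (Fin d) (Fin d) ℂ => M i j :=
  (measurable_pi_apply j).comp (measurable_pi_apply i)

lemma measurable_mul2 :
    Measurable fun p : Matrix (Fin d) (Fin d) ℂ × Matrix (Fin d) (Fin d) ℂ => p.1 * p.2 := by
  apply measurable_pi_lambda
  intro i
  apply measurable_pi_lambda
  intro j
  simp only [Matrix.mul_apply]
  exact Finset.measurable_sum _ fun k _ =>
    ((measurable_entry i k).comp measurable_fst).mul ((measurable_entry k j).comp measurable_snd)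

lemma measurable_list_prod {α ι : Type*} [MeasurableSpace α] (l : List ι)
    (F : ι → α → Matrix (Fin d) (Fin d) ℂ) (hF : ∀ i, Measurable (F i)) :
    Measurable fun a => (l.map fun i => F i a).prod := by
  induction l with
  | nil => simpa using measurable_const
  | cons i l ih =>
    simp only [List.map_cons, List.prod_cons]
    exact measurable_mul2.comp ((hF i).prodMk ih)

lemma indep_step (hindep : iIndepFun X μ)
    (hmeas : ∀ n, Measurable (X n)) (n : ℕ) :
    IndepFun (matProd X n) (X n) μ := by
  classical
  have h := hindep.indepFun_finset (Finset.range n) {n}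
    (by simp [Finset.disjoint_singleton_right]) hmeas
  have hφ : Measurable (fun v : ((Finset.range n : Finset ℕ)) → Matrix (Fin d) (Fin d) ℂ =>
      ((List.range n).attach.map fun i => v ⟨i.1, by simpa using i.2⟩).prod) :=
    measurable_list_prod _ _ fun i => measurable_pi_apply _
  have hψ : Measurable (fun w : (({n} : Finset ℕ)) → Matrix (Fin d) (Fin d) ℂ =>
      w ⟨n, Finset.mem_singleton_self n⟩) := measurable_pi_apply _
  have h2 := h.comp hφ hψ
  have e1 : ((fun v : ((Finset.range n : Finset ℕ)) → Matrix (Fin d) (Fin d) ℂ =>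
      ((List.range n).attach.map fun i => v ⟨i.1, by simpa using i.2⟩).prod) ∘
      (fun ω (i : (Finset.range n : Finset ℕ)) => X i ω)) = matProd X n := by
    funext ω
    simp only [Function.comp_apply, matProd]
    congr 1
    simpa using List.attach_map_coe (List.range n) (fun i => X i ω)
  have e2 : ((fun w : (({n} : Finset ℕ)) → Matrix (Fin d) (Fin d) ℂ =>
      w ⟨n, Finset.mem_singleton_self n⟩) ∘
      (fun ω (i : (({n} : Finset ℕ))) => X i ω)) = X n := rfl
  rwa [e1, e2] at h2

lemma entry_formula (M A : Matrix (Fin d) (Fin d) ℂ) (i j : Fin d) :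
    (Mᴴ * A * M) i j = ∑ k, ∑ l, A k l * (star (M k i) * M l j) := by
  simp only [Matrix.mul_apply, Matrix.conjTranspose_apply, Finset.sum_mul]
  rw [Finset.sum_comm]
  exact Finset.sum_congr rfl fun k _ => Finset.sum_congr rfl fun l _ => by ring

lemma S_succ (n : ℕ) (ω : Ω) : (matProd X (n + 1) ω)ᴴ * matProd X (n + 1) ω
    = (X n ω)ᴴ * ((matProd X n ω)ᴴ * matProd X n ω) * X n ω := by
  have : matProd X (n + 1) ω = matProd X n ω * X n ω := by simp [matProd, List.range_succ]
  rw [this, conjTranspose_mul]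
  simp only [Matrix.mul_assoc]

lemma trace_re_eq (M : Matrix (Fin d) (Fin d) ℂ) :
    (Matrix.trace (Mᴴ * M)).re = ∑ p, ∑ q, ‖M p q‖ ^ 2 := by
  simp only [Matrix.trace, Matrix.diag, Matrix.mul_apply, Matrix.conjTranspose_apply,
    Complex.re_sum]
  rw [Finset.sum_comm]
  refine Finset.sum_congr rfl fun p _ => Finset.sum_congr rfl fun q _ => ?_
  have : (starRingEnd ℂ) (M p q) * M p q = (Complex.normSq (M p q) : ℂ) :=
    Complex.normSq_eq_conj_mul_self.symm
  rw [show star (M p q) = (starRingEnd ℂ) (M p q) from rfl, this]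
  simp [Complex.normSq_eq_norm_sq, ← Complex.ofReal_pow]

lemma norm_pair_le (M : Matrix (Fin d) (Fin d) ℂ) (k i l j : Fin d) :
    ‖star (M k i) * M l j‖ ≤ (Matrix.trace (Mᴴ * M)).re := by
  have hsq : ∀ p q, ‖M p q‖ ^ 2 ≤ ∑ p', ∑ q', ‖M p' q'‖ ^ 2 := fun p q =>
    le_trans (Finset.single_le_sum (f := fun q' => ‖M p q'‖ ^ 2)
        (fun _ _ => sq_nonneg _) (Finset.mem_univ q))
      (Finset.single_le_sum (f := fun p' => ∑ q', ‖M p' q'‖ ^ 2)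
        (fun _ _ => Finset.sum_nonneg fun _ _ => sq_nonneg _) (Finset.mem_univ p))
  rw [trace_re_eq, norm_mul, norm_star]
  nlinarith [hsq k i, hsq l j, norm_nonneg (M k i), norm_nonneg (M l j),
    sq_nonneg (‖M k i‖ - ‖M l j‖)]


lemma measurable_S_entry (n : ℕ) (k l : Fin d) :
    Measurable fun M : Matrix (Fin d) (Fin d) ℂ => (Mᴴ * M) k l := by
  simp only [Matrix.mul_apply, Matrix.conjTranspose_apply]
  exact Finset.measurable_sum _ fun p _ => (continuous_star.measurable.comp (measurable_entry p k)).mul (measurable_entry p l)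

lemma measurable_pair (k i l j : Fin d) :
    Measurable fun M : Matrix (Fin d) (Fin d) ℂ => star (M k i) * M l j :=
  (continuous_star.measurable.comp (measurable_entry k i)).mul (measurable_entry l j)

lemma measurable_trace_re :
    Measurable fun M : Matrix (Fin d) (Fin d) ℂ => (Matrix.trace (Mᴴ * M)).re := by
  apply Complex.measurable_re.comp
  simp only [Matrix.trace, Matrix.diag, Matrix.mul_apply, Matrix.conjTranspose_apply]
  exact Finset.measurable_sum _ fun q _ => Finset.measurable_sum _ fun p _ =>
    (continuous_star.measurable.comp (measurable_entry p q)).mul (measurable_entry p q)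

section transfer

variable {E : Type*} [NormedAddCommGroup E] [MeasurableSpace E] [BorelSpace E]
  [SecondCountableTopology E] [NormedSpace ℝ E]

lemma integrable_comp_eq (hmeas : ∀ n, Measurable (X n))
    (hident : ∀ n, μ.map (X n) = μ.map (X 0))
    (f : Matrix (Fin d) (Fin d) ℂ → E) (hf : Measurable f) (n : ℕ)
    (h0 : Integrable (fun ω => f (X 0 ω)) μ) :
    Integrable (fun ω => f (X n ω)) μ := by
  have h1 : Integrable (fun ω => f (X n ω)) μ ↔ Integrable f (μ.map (X n)) :=
    (integrable_map_measure hf.aestronglyMeasurable (hmeas n).aemeasurable).symm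
  have h2 : Integrable (fun ω => f (X 0 ω)) μ ↔ Integrable f (μ.map (X 0)) :=
    (integrable_map_measure hf.aestronglyMeasurable (hmeas 0).aemeasurable).symm
  rw [h1, hident n, ← h2]
  exact h0

lemma integral_comp_eq (hmeas : ∀ n, Measurable (X n))
    (hident : ∀ n, μ.map (X n) = μ.map (X 0))
    (f : Matrix (Fin d) (Fin d) ℂ → E) (hf : Measurable f) (n : ℕ) :
    ∫ ω, f (X n ω) ∂μ = ∫ ω, f (X 0 ω) ∂μ := by
  rw [← integral_map (hmeas n).aemeasurable hf.aestronglyMeasurable, hident n,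
    integral_map (hmeas 0).aemeasurable hf.aestronglyMeasurable]

end transfer

lemma integrable_trace_re (hmeas : ∀ n, Measurable (X n))
    (hident : ∀ n, μ.map (X n) = μ.map (X 0))
    (hmom : Integrable (fun ω => (Matrix.trace ((X 0 ω)ᴴ * X 0 ω)).re) μ) (n : ℕ) :
    Integrable (fun ω => (Matrix.trace ((X n ω)ᴴ * X n ω)).re) μ :=
  integrable_comp_eq hmeas hident _ measurable_trace_re n hmom

lemma integrable_pair (hmeas : ∀ n, Measurable (X n))
    (hident : ∀ n, μ.map (X n) = μ.map (X 0))
    (hmom : Integrable (fun ω => (Matrix.trace ((X 0 ω)ᴴ * X 0 ω)).re) μ)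
    (n : ℕ) (k i l j : Fin d) :
    Integrable (fun ω => star (X n ω k i) * X n ω l j) μ := by
  refine Integrable.mono' (integrable_trace_re hmeas hident hmom n)
    (((measurable_pair k i l j).comp (hmeas n)).aestronglyMeasurable)
    (Filter.Eventually.of_forall fun ω => ?_)
  exact norm_pair_le (X n ω) k i l j

lemma integral_mul_complex [IsProbabilityMeasure μ] {f g : Ω → ℂ}
    (h : IndepFun f g μ) (hf : Integrable f μ) (hg : Integrable g μ) :
    ∫ ω, f ω * g ω ∂μ = (∫ ω, f ω ∂μ) * ∫ ω, g ω ∂μ := by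
  have hmap := (indepFun_iff_map_prod_eq_prod_map_map hf.aemeasurable hg.aemeasurable).1 h
  have h1 : ∫ ω, f ω * g ω ∂μ = ∫ p : ℂ × ℂ, p.1 * p.2 ∂(μ.map fun ω => (f ω, g ω)) := by
    rw [integral_map (f := fun p : ℂ × ℂ => p.1 * p.2) (hf.aemeasurable.prodMk hg.aemeasurable)
      (measurable_fst.mul measurable_snd).aestronglyMeasurable]
  haveI : IsProbabilityMeasure (μ.map f) := Measure.isProbabilityMeasure_map hf.aemeasurable
  haveI : IsProbabilityMeasure (μ.map g) := Measure.isProbabilityMeasure_map hg.aemeasurable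
  rw [h1, hmap, MeasureTheory.integral_prod_mul (fun x : ℂ => x) (fun y : ℂ => y),
    integral_map (f := fun x : ℂ => x) hf.aemeasurable measurable_id.aestronglyMeasurable,
    integral_map (f := fun x : ℂ => x) hg.aemeasurable measurable_id.aestronglyMeasurable]

lemma integral_double_sum {f : Fin d → Fin d → Ω → ℂ} (h : ∀ k l, Integrable (f k l) μ) :
    ∫ ω, ∑ k, ∑ l, f k l ω ∂μ = ∑ k, ∑ l, ∫ ω, f k l ω ∂μ := by
  rw [integral_finset_sum _ fun k _ => integrable_finset_sum _ fun l _ => h k l]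
  exact Finset.sum_congr rfl fun k _ => integral_finset_sum _ fun l _ => h k l

end Stmt3Aux

open Stmt3Aux

/-- The second moments `aₙ = E‖X₁ ⋯ Xₙ‖²_{HS}` of products of i.i.d. random matrices
satisfy the linear recurrence given by the characteristic polynomial of the operator
`T : A ↦ E[X^* A X]` on the `d²`-dimensional space `ℂ^{d×d}`. -/
theorem stmt3 {d : ℕ} (hd : 1 ≤ d) {Ω : Type*} [MeasurableSpace Ω] (μ : Measure Ω)
    [IsProbabilityMeasure μ] (X : ℕ → Ω → Matrix (Fin d) (Fin d) ℂ)
    (hmeas : ∀ n, Measurable (X n))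
    (hindep : iIndepFun X μ)
    (hident : ∀ n, μ.map (X n) = μ.map (X 0))
    (hmom : Integrable (fun ω => (Matrix.trace ((X 0 ω)ᴴ * X 0 ω)).re) μ)
    (a : ℕ → ℂ)
    (ha : ∀ n, a n = ∫ ω, Matrix.trace ((matProd X n ω)ᴴ * matProd X n ω) ∂μ)
    (T : Matrix (Fin d) (Fin d) ℂ →ₗ[ℂ] Matrix (Fin d) (Fin d) ℂ)
    (hT : ∀ A i j, T A i j = ∫ ω, ((X 0 ω)ᴴ * A * X 0 ω) i j ∂μ) :
    ∀ n : ℕ, 1 ≤ n →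
      ∑ j ∈ Finset.range (d ^ 2 + 1), (LinearMap.charpoly T).coeff j * a (n + j) = 0 := by
  classical
  -- integrability of the entries of (matProd X m)ᴴ * matProd X m
  have hInt : ∀ m (k l : Fin d),
      Integrable (fun ω => ((matProd X m ω)ᴴ * matProd X m ω) k l) μ := by
    intro m
    induction m with
    | zero =>
      intro k l
      have h0 : (fun ω => ((matProd X 0 ω)ᴴ * matProd X 0 ω) k l)
          = fun _ : Ω => (1 : Matrix (Fin d) (Fin d) ℂ) k l := by
        funext ω; simp [matProd]
      rw [h0]; exact integrable_const _
    | succ m ih =>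
      intro k l
      have hexp : (fun ω => ((matProd X (m+1) ω)ᴴ * matProd X (m+1) ω) k l)
          = fun ω => ∑ p, ∑ q, ((matProd X m ω)ᴴ * matProd X m ω) p q *
              (star (X m ω p k) * X m ω q l) := by
        funext ω; rw [S_succ]; exact entry_formula _ _ _ _
      rw [hexp]
      refine integrable_finset_sum _ fun p _ => integrable_finset_sum _ fun q _ => ?_
      have hind : IndepFun (fun ω => ((matProd X m ω)ᴴ * matProd X m ω) p q)
          (fun ω => star (X m ω p k) * X m ω q l) μ :=
        (indep_step hindep hmeas m).comp (measurable_S_entry m p q) (measurable_pair p k q l)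
      exact hind.integrable_mul (ih p q) (integrable_pair hmeas hident hmom m p k q l)
  set t : Fin d → Fin d → Fin d → Fin d → ℂ :=
    fun k i l j => ∫ ω, star (X 0 ω k i) * X 0 ω l j ∂μ with htdef
  have hTexp : ∀ (A : Matrix (Fin d) (Fin d) ℂ) i j,
      T A i j = ∑ k, ∑ l, A k l * t k i l j := by
    intro A i j
    rw [hT A i j]
    have h0 : (fun ω => ((X 0 ω)ᴴ * A * X 0 ω) i j)
        = fun ω => ∑ k, ∑ l, A k l * (star (X 0 ω k i) * X 0 ω l j) :=
      funext fun ω => entry_formula _ _ _ _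
    rw [h0, integral_double_sum
      (f := fun k l ω => A k l * (star (X 0 ω k i) * X 0 ω l j))
      (fun k l => (integrable_pair hmeas hident hmom 0 k i l j).const_mul (A k l))]
    exact Finset.sum_congr rfl fun k _ => Finset.sum_congr rfl fun l _ =>
      integral_const_mul _ _
  set B : ℕ → Matrix (Fin d) (Fin d) ℂ :=
    fun m => Matrix.of fun i j => ∫ ω, ((matProd X m ω)ᴴ * matProd X m ω) i j ∂μ with hBdef
  have hBsucc : ∀ m, B (m + 1) = T (B m) := by
    intro m
    ext i j
    show (∫ ω, ((matProd X (m+1) ω)ᴴ * matProd X (m+1) ω) i j ∂μ) = T (B m) i j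
    have hexp : (fun ω => ((matProd X (m+1) ω)ᴴ * matProd X (m+1) ω) i j)
        = fun ω => ∑ k, ∑ l, ((matProd X m ω)ᴴ * matProd X m ω) k l *
            (star (X m ω k i) * X m ω l j) := by
      funext ω; rw [S_succ]; exact entry_formula _ _ _ _
    have hind : ∀ k l : Fin d, IndepFun (fun ω => ((matProd X m ω)ᴴ * matProd X m ω) k l)
        (fun ω => star (X m ω k i) * X m ω l j) μ := fun k l =>
      (indep_step hindep hmeas m).comp (measurable_S_entry m k l) (measurable_pair k i l j)
    rw [hexp, integral_double_sum
      (f := fun k l ω => ((matProd X m ω)ᴴ * matProd X m ω) k l *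
        (star (X m ω k i) * X m ω l j))
      (fun k l => (hind k l).integrable_mul (hInt m k l)
        (integrable_pair hmeas hident hmom m k i l j)), hTexp (B m) i j]
    refine Finset.sum_congr rfl fun k _ => Finset.sum_congr rfl fun l _ => ?_
    rw [integral_mul_complex (hind k l) (hInt m k l)
      (integrable_pair hmeas hident hmom m k i l j)]
    congr 1
    exact integral_comp_eq hmeas hident (fun M => star (M k i) * M l j)
      (measurable_pair k i l j) m
  have hBpow : ∀ m j, B (m + j) = (T ^ j) (B m) := by
    intro m j
    induction j with
    | zero => simp
    | succ j ihj =>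
      rw [show m + (j + 1) = (m + j) + 1 from rfl, hBsucc, ihj, pow_succ']
      rfl
  have haB : ∀ m, a m = Matrix.trace (B m) := by
    intro m
    rw [ha m]
    have h1 : (fun ω => Matrix.trace ((matProd X m ω)ᴴ * matProd X m ω))
        = fun ω => ∑ i, ((matProd X m ω)ᴴ * matProd X m ω) i i := by
      funext ω; rfl
    rw [h1, integral_finset_sum _ fun i _ => hInt m i i]
    rfl
  have hdeg : (LinearMap.charpoly T).natDegree = d ^ 2 := by
    rw [LinearMap.charpoly_natDegree]
    simp [Module.finrank_matrix, sq]
  intro n hn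
  have h0 : ∑ j ∈ Finset.range (d ^ 2 + 1), (LinearMap.charpoly T).coeff j * a (n + j)
      = ∑ j ∈ Finset.range (d ^ 2 + 1),
          Matrix.trace ((LinearMap.charpoly T).coeff j • ((T ^ j) (B n))) := by
    refine Finset.sum_congr rfl fun j _ => ?_
    rw [haB (n + j), hBpow n j, Matrix.trace_smul, smul_eq_mul]
  rw [h0, ← Matrix.trace_sum]
  have h2 : ∑ j ∈ Finset.range (d ^ 2 + 1), (LinearMap.charpoly T).coeff j • ((T ^ j) (B n))
      = (Polynomial.aeval T (LinearMap.charpoly T)) (B n) := by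
    rw [Polynomial.aeval_eq_sum_range, hdeg]
    simp [LinearMap.sum_apply, LinearMap.smul_apply]
  rw [h2, LinearMap.aeval_self_charpoly]
  simp
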